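/- For each n ≥ 3, the prism graph Π_n = C_n □ K₂ (the Cartesian product of the n-cycle with an edge) has sum index exactly 5. -/

import Mathlib

open SimpleGraph

/-- The sum index of a finite simple graph. -/
noncomputable def sumIndex {V : Type*} [Fintype V] (G : SimpleGraph V) : ℕ :=
  sInf {n | ∃ f : V → ℤ, Function.Injective f ∧
    {s : ℤ | ∃ u v, G.Adj u v ∧ s = f u + f v}.ncard = n}

def lab (n i j : ℕ) : ℤ :=
  if j = 0 then
    if i = 0 then (if n % 2 = 1 then (n:ℤ) else 0)
    else (if i % 2 = 1 then (i:ℤ) else -(i:ℤ))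
  else
    if i = 0 then (if n % 2 = 1 then -(n:ℤ) else (n:ℤ))
    else (if i % 2 = 1 then -(i:ℤ) else (i:ℤ))

lemma lab_inj {n i i' j j' : ℕ} (hn : 3 ≤ n) (hi : i < n) (hi' : i' < n) (hj : j < 2) (hj' : j' < 2)
    (h : lab n i j = lab n i' j') : i = i' ∧ j = j' := by
  unfold lab at h
  split_ifs at h <;> omega

lemma lab_sum {n i i' j j' : ℕ} (hn : 3 ≤ n) (hi : i < n) (hi' : i' < n) (hj : j < 2) (hj' : j' < 2)
    (hadj : (j = j' ∧ (i' = i + 1 ∨ i = i' + 1 ∨ (i = 0 ∧ i' + 1 = n) ∨ (i' = 0 ∧ i + 1 = n)))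
      ∨ (i = i' ∧ j ≠ j')) :
    lab n i j + lab n i' j' ∈
      ({-1, 0, 1, if n % 2 = 1 then (n:ℤ) + 1 else (n:ℤ) - 1,
        if n % 2 = 1 then -(n:ℤ) - 1 else (n:ℤ)} : Set ℤ) := by
  simp only [Set.mem_insert_iff, Set.mem_singleton_iff]
  unfold lab
  split_ifs <;> omega

lemma cyc_adj_val {m : ℕ} {u v : Fin (m+3)} (h : (cycleGraph (m+3)).Adj u v) :
    v.val = u.val + 1 ∨ u.val = v.val + 1 ∨ (u.val = 0 ∧ v.val + 1 = m + 3) ∨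
      (v.val = 0 ∧ u.val + 1 = m + 3) := by
  rw [cycleGraph_adj] at h
  have hu := u.isLt
  have hv := v.isLt
  rcases h with h | h
  · rw [sub_eq_iff_eq_add] at h
    have : u.val = (1 + v.val) % (m+3) := by
      rw [h, Fin.val_add, Fin.val_one]
    rcases Nat.lt_or_ge (1 + v.val) (m+3) with hlt | hge
    · rw [Nat.mod_eq_of_lt hlt] at this; omega
    · have hv3 : v.val = m + 2 := by omega
      rw [hv3] at this
      rw [show 1 + (m+2) = m + 3 by omega, Nat.mod_self] at this
      omega
  · rw [sub_eq_iff_eq_add] at h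
    have : v.val = (1 + u.val) % (m+3) := by
      rw [h, Fin.val_add, Fin.val_one]
    rcases Nat.lt_or_ge (1 + u.val) (m+3) with hlt | hge
    · rw [Nat.mod_eq_of_lt hlt] at this; omega
    · have hu3 : u.val = m + 2 := by omega
      rw [hu3] at this
      rw [show 1 + (m+2) = m + 3 by omega, Nat.mod_self] at this
      omega

theorem upper_bound (m : ℕ) :
    ∃ f : Fin (m+3) × Fin 2 → ℤ, Function.Injective f ∧
      {s : ℤ | ∃ u v, (cycleGraph (m+3) □ (⊤ : SimpleGraph (Fin 2))).Adj u v
        ∧ s = f u + f v}.ncard ≤ 5 := by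
  set n := m + 3 with hn
  refine ⟨fun p => lab n p.1.val p.2.val, ?_, ?_⟩
  · intro p q h
    obtain ⟨h1, h2⟩ := lab_inj (by omega) p.1.isLt q.1.isLt p.2.isLt q.2.isLt h
    exact Prod.ext (Fin.ext h1) (Fin.ext h2)
  · set T : Set ℤ := {-1, 0, 1, if n % 2 = 1 then (n:ℤ) + 1 else (n:ℤ) - 1,
      if n % 2 = 1 then -(n:ℤ) - 1 else (n:ℤ)} with hT
    have hTfin : T.Finite := by
      rw [hT]
      exact (((((Set.finite_singleton _).insert _).insert _).insert _).insert _)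
    have hsub : {s : ℤ | ∃ u v, (cycleGraph (m+3) □ (⊤ : SimpleGraph (Fin 2))).Adj u v
        ∧ s = (fun p => lab n p.1.val p.2.val) u + (fun p => lab n p.1.val p.2.val) v} ⊆ T := by
      rintro s ⟨u, v, hadj, rfl⟩
      rw [boxProd_adj] at hadj
      apply lab_sum (by omega) u.1.isLt v.1.isLt u.2.isLt v.2.isLt
      rcases hadj with ⟨hc, he⟩ | ⟨ht, he⟩
      · left
        refine ⟨congrArg Fin.val he, ?_⟩
        exact cyc_adj_val hc
      · right
        refine ⟨congrArg Fin.val he, ?_⟩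
        rw [top_adj] at ht
        exact fun hval => ht (Fin.ext hval)
    refine le_trans (Set.ncard_le_ncard hsub hTfin) ?_
    rw [hT]
    refine le_trans (Set.ncard_insert_le _ _) ?_
    refine le_trans (Nat.add_le_add_right (Set.ncard_insert_le _ _) 1) ?_
    refine le_trans (Nat.add_le_add_right (Nat.add_le_add_right (Set.ncard_insert_le _ _) 1) 1) ?_
    refine le_trans (Nat.add_le_add_right (Nat.add_le_add_right (Nat.add_le_add_right
      (Set.ncard_insert_le _ _) 1) 1) 1) ?_
    simp [Set.ncard_singleton]

lemma lower_bound (m : ℕ) (f : Fin (m+3) × Fin 2 → ℤ) (hf : Function.Injective f) :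
    5 ≤ {s : ℤ | ∃ u v, (cycleGraph (m+3) □ (⊤ : SimpleGraph (Fin 2))).Adj u v
          ∧ s = f u + f v}.ncard := by
  set G := cycleGraph (m+3) □ (⊤ : SimpleGraph (Fin 2)) with hG
  set S := {s : ℤ | ∃ u v, G.Adj u v ∧ s = f u + f v} with hS
  have hSfin : S.Finite := by
    apply Set.Finite.subset (Set.finite_range
      (fun p : (Fin (m+3) × Fin 2) × (Fin (m+3) × Fin 2) => f p.1 + f p.2))
    rintro s ⟨u, v, _, rfl⟩
    exact ⟨(u, v), rfl⟩
  -- adjacency of the three neighbors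
  have hone : (1 : Fin (m+3)).val = 1 := Fin.val_one _
  have hadj1 : ∀ v : Fin (m+3) × Fin 2, G.Adj v (v.1 + 1, v.2) := by
    intro v
    rw [hG, boxProd_adj]
    left
    refine ⟨?_, rfl⟩
    rw [cycleGraph_adj]
    right
    exact add_sub_cancel_left _ _
  have hadj2 : ∀ v : Fin (m+3) × Fin 2, G.Adj v (v.1 - 1, v.2) := by
    intro v
    rw [hG, boxProd_adj]
    left
    refine ⟨?_, rfl⟩
    rw [cycleGraph_adj]
    left
    exact sub_sub_cancel _ _
  have hne2 : ∀ j : Fin 2, j ≠ j + 1 := by decide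
  have hadj3 : ∀ v : Fin (m+3) × Fin 2, G.Adj v (v.1, v.2 + 1) := by
    intro v
    rw [hG, boxProd_adj]
    right
    exact ⟨hne2 v.2, rfl⟩
  -- distinctness of neighbors
  have h110 : (1 : Fin (m+3)) ≠ 0 := by
    intro h
    rw [Fin.ext_iff, hone] at h
    simp at h
  have hAB : ∀ i : Fin (m+3), i + 1 ≠ i - 1 := by
    intro i h
    have h2 : (1 : Fin (m+3)) + 1 = 0 := by open Fin.CommRing in linear_combination h
    have : ((1 : Fin (m+3)) + 1).val = 2 := by
      rw [Fin.val_add, hone]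
      exact Nat.mod_eq_of_lt (by omega)
    rw [h2] at this
    simp at this
  have hAi : ∀ i : Fin (m+3), i + 1 ≠ i := by
    intro i h
    exact h110 (by open Fin.CommRing in linear_combination h)
  have hBi : ∀ i : Fin (m+3), i - 1 ≠ i := by
    intro i h
    exact h110 (by open Fin.CommRing in linear_combination -h)
  -- choose max and min vertices
  obtain ⟨u, -, hu⟩ := Finset.exists_max_image Finset.univ f ⟨(0, 0), Finset.mem_univ _⟩
  obtain ⟨w, -, hw⟩ := Finset.exists_min_image Finset.univ f ⟨(0, 0), Finset.mem_univ _⟩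
  simp only [Finset.mem_univ, forall_const] at hu hw
  set Au : Finset ℤ := {f u + f (u.1 + 1, u.2), f u + f (u.1 - 1, u.2), f u + f (u.1, u.2 + 1)}
    with hAu
  set Aw : Finset ℤ := {f w + f (w.1 + 1, w.2), f w + f (w.1 - 1, w.2), f w + f (w.1, w.2 + 1)}
    with hAw
  have card3 : ∀ v : Fin (m+3) × Fin 2,
      ({f v + f (v.1 + 1, v.2), f v + f (v.1 - 1, v.2), f v + f (v.1, v.2 + 1)} :
        Finset ℤ).card = 3 := by
    intro v
    rw [Finset.card_insert_of_notMem, Finset.card_insert_of_notMem, Finset.card_singleton]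
    · simp only [Finset.mem_singleton]
      intro h
      exact hne2 v.2 (congrArg Prod.snd (hf (by linarith : f (v.1-1, v.2) = f (v.1, v.2+1))))
    · simp only [Finset.mem_insert, Finset.mem_singleton]
      rintro (h | h)
      · exact hAB v.1 (congrArg Prod.fst (hf (by linarith : f (v.1+1, v.2) = f (v.1-1, v.2))))
      · exact hne2 v.2 (congrArg Prod.snd (hf (by linarith : f (v.1+1, v.2) = f (v.1, v.2+1))))
  have hAuS : ∀ s ∈ Au, ∃ a, s = f u + f a := by
    intro s hs
    simp only [hAu, Finset.mem_insert, Finset.mem_singleton] at hs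
    rcases hs with h | h | h <;> exact ⟨_, h⟩
  have hAwS : ∀ s ∈ Aw, ∃ a, s = f w + f a := by
    intro s hs
    simp only [hAw, Finset.mem_insert, Finset.mem_singleton] at hs
    rcases hs with h | h | h <;> exact ⟨_, h⟩
  have hinter : Au ∩ Aw ⊆ {f u + f w} := by
    intro s hs
    rw [Finset.mem_inter] at hs
    obtain ⟨a, ha⟩ := hAuS s hs.1
    obtain ⟨b, hb⟩ := hAwS s hs.2
    have h1 : f w ≤ f a := hw a
    have h2 : f b ≤ f u := hu b
    rw [Finset.mem_singleton]
    omega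
  have hsubS : ↑(Au ∪ Aw) ⊆ S := by
    intro s hs
    rw [Finset.coe_union, Set.mem_union] at hs
    rcases hs with hs | hs <;>
      simp only [hAu, hAw, Finset.coe_insert, Finset.coe_singleton, Set.mem_insert_iff,
        Set.mem_singleton_iff] at hs <;>
      rcases hs with h | h | h
    · exact ⟨u, _, hadj1 u, h⟩
    · exact ⟨u, _, hadj2 u, h⟩
    · exact ⟨u, _, hadj3 u, h⟩
    · exact ⟨w, _, hadj1 w, h⟩
    · exact ⟨w, _, hadj2 w, h⟩
    · exact ⟨w, _, hadj3 w, h⟩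
  have hcard : 5 ≤ (Au ∪ Aw).card := by
    have h1 := Finset.card_union_add_card_inter Au Aw
    have h2 : (Au ∩ Aw).card ≤ 1 :=
      le_trans (Finset.card_le_card hinter) (by simp)
    have h3 := card3 u
    have h4 := card3 w
    rw [← hAu] at h3
    rw [← hAw] at h4
    omega
  calc (5 : ℕ) ≤ (Au ∪ Aw).card := hcard
    _ = (↑(Au ∪ Aw) : Set ℤ).ncard := (Set.ncard_coe_finset _).symm
    _ ≤ S.ncard := Set.ncard_le_ncard hsubS hSfin

/-- For `n ≥ 3`, the prism graph `Π_n = C_n □ K₂` has sum index exactly `5`. -/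
theorem stmt8 (n : ℕ) (hn : 3 ≤ n) :
    sumIndex (SimpleGraph.cycleGraph n □ (⊤ : SimpleGraph (Fin 2))) = 5 := by
  obtain ⟨m, rfl⟩ : ∃ m, n = m + 3 := ⟨n - 3, by omega⟩
  unfold sumIndex
  set P := {k | ∃ f : Fin (m+3) × Fin 2 → ℤ, Function.Injective f ∧
    {s : ℤ | ∃ u v, (cycleGraph (m+3) □ (⊤ : SimpleGraph (Fin 2))).Adj u v
      ∧ s = f u + f v}.ncard = k} with hP
  obtain ⟨f, hfinj, hfcard⟩ := upper_bound m
  have hmem : {s : ℤ | ∃ u v, (cycleGraph (m+3) □ (⊤ : SimpleGraph (Fin 2))).Adj u v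
      ∧ s = f u + f v}.ncard ∈ P := ⟨f, hfinj, rfl⟩
  have hlb : ∀ k ∈ P, 5 ≤ k := by
    rintro k ⟨g, hginj, rfl⟩
    exact lower_bound m g hginj
  have h1 : sInf P ≤ 5 := le_trans (Nat.sInf_le hmem) hfcard
  have h2 : 5 ≤ sInf P := le_csInf ⟨_, hmem⟩ hlb
  omega
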